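/- For a uniformly random bridge b of length σ, P(b(σ) = −k) converges to 2^{−k−1} as σ → ∞, for each fixed integer k ≥ 0. -/

import Mathlib

open Filter

open Finset

/-- A (discrete) bridge of length `σ`, encoded as a list of `σ+1` integer values:
`b 0 = 0`, each increment lies in `ℕ₀ ∪ {-1}` (i.e. is `≥ -1`), and the final value is `≤ 0`. -/
def IsBridge (σ : ℕ) (b : List ℤ) : Prop :=
  b.length = σ + 1 ∧ b.getD 0 0 = 0 ∧
    (∀ i < σ, -1 ≤ b.getD (i + 1) 0 - b.getD i 0) ∧ b.getD σ 0 ≤ 0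

def PreB (σ : ℕ) (b : List ℤ) : Prop :=
  b.length = σ + 1 ∧ b.getD 0 0 = 0 ∧ (∀ i < σ, -1 ≤ b.getD (i + 1) 0 - b.getD i 0)

lemma getD_ofFn {n : ℕ} (f : Fin n → ℤ) (i : ℕ) (h : i < n) :
    (List.ofFn f).getD i 0 = f ⟨i, h⟩ := by
  rw [List.getD_eq_getElem _ _ (by simpa using h)]
  simp

lemma telescope (b : List ℤ) (h0 : b.getD 0 0 = 0) (i : ℕ) :
    b.getD i 0 = ∑ j ∈ Finset.range i, (b.getD (j+1) 0 - b.getD j 0) := by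
  rw [Finset.sum_range_sub (f := fun j => b.getD j 0), h0, sub_zero]

lemma sum_dite' {σ i : ℕ} (hi : i ≤ σ) (f : ∀ j, j < σ → ℤ) (F : ℕ → ℤ)
    (hc : ∀ j h, f j h = F j) :
    ∑ j ∈ Finset.range i, (if h : j < σ then f j h else 0) = ∑ j ∈ Finset.range i, F j :=
  Finset.sum_congr rfl fun j hj => by
    rw [dif_pos (lt_of_lt_of_le (Finset.mem_range.mp hj) hi)]; exact hc ..

noncomputable def preEquiv (σ : ℕ) : {b : List ℤ // PreB σ b} ≃ (Fin σ → ℕ) where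
  toFun b := fun i => (b.1.getD (i+1) 0 - b.1.getD i 0 + 1).toNat
  invFun y := ⟨List.ofFn (fun i : Fin (σ+1) =>
      ∑ j ∈ Finset.range i, (if h : j < σ then (y ⟨j, h⟩ : ℤ) - 1 else 0)), by
    refine ⟨by simp, ?_, ?_⟩
    · rw [getD_ofFn _ 0 (Nat.succ_pos σ)]; simp
    · intro i hi
      rw [getD_ofFn _ (i+1) (by omega), getD_ofFn _ i (by omega)]
      simp only [Finset.sum_range_succ]
      rw [add_sub_cancel_left, dif_pos hi]
      have : (0:ℤ) ≤ (y ⟨i, hi⟩ : ℤ) := Int.natCast_nonneg _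
      linarith⟩
  left_inv b := by
    apply Subtype.ext
    obtain ⟨b, hlen, h0, hinc⟩ := b
    apply List.ext_getElem (by simpa using hlen.symm)
    intro i hi hi'
    have hiσ : i < σ + 1 := by simpa [hlen] using hi'
    simp only [List.getElem_ofFn]
    have h1 := sum_dite' (Nat.lt_succ_iff.mp hiσ)
      (fun j hj => ((b.getD (j+1) 0 - b.getD j 0 + 1).toNat : ℤ) - 1)
      (fun j => b.getD (j+1) 0 - b.getD j 0)
      (fun j hj => by
        beta_reduce
        rw [Int.toNat_of_nonneg (by have := hinc j hj; linarith)]; ring)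
    rw [h1, ← telescope b h0 i, List.getD_eq_getElem _ _ (show i < b.length by rw [hlen]; exact hiσ)]
  right_inv y := by
    funext i
    simp only
    rw [getD_ofFn _ (i+1) (by omega), getD_ofFn _ i (by omega)]
    simp only [Finset.sum_range_succ, add_sub_cancel_left]
    rw [dif_pos i.is_lt]
    simp

lemma endpoint_eq (σ : ℕ) (b : {b : List ℤ // PreB σ b}) :
    b.1.getD σ 0 = (∑ i, (preEquiv σ b i : ℤ)) - σ := by
  obtain ⟨b, hb⟩ := b
  obtain ⟨hlen, h0, hinc⟩ := hb
  have key : ∀ i : Fin σ, ((preEquiv σ ⟨b, hlen, h0, hinc⟩ i : ℤ)) =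
      (b.getD (i+1) 0 - b.getD i 0) + 1 := by
    intro i
    exact Int.toNat_of_nonneg (by have := hinc i i.is_lt; linarith)
  rw [Finset.sum_congr rfl (fun i _ => key i), Finset.sum_add_distrib]
  simp only [Finset.sum_const, Finset.card_univ, Fintype.card_fin, nsmul_eq_mul, mul_one]
  have ht := telescope b h0 σ
  rw [← Fin.sum_univ_eq_sum_range (fun j => b.getD (j+1) 0 - b.getD j 0) σ] at ht
  rw [← ht]
  ring


lemma card_tuple_sum (n m : ℕ) :
    Nat.card {y : Fin n → ℕ // ∑ i, y i = m} = (n + m - 1).choose m := by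
  have e : Sym (Fin n) m ≃ {y : Fin n → ℕ // ∑ i, y i = m} :=
    Equiv.subtypeEquiv (Multiset.toFinsupp.toEquiv.trans Finsupp.equivFunOnFinite)
      (fun s => by simp [Finsupp.equivFunOnFinite, Multiset.sum_count_eq_card])
  rw [Nat.card_congr e.symm, Nat.card_eq_fintype_card, Sym.card_sym_eq_choose, Fintype.card_fin]

noncomputable def slackEquiv (n m : ℕ) :
    {y : Fin n → ℕ // ∑ i, y i ≤ m} ≃ {z : Fin (n+1) → ℕ // ∑ i, z i = m} where
  toFun y := ⟨Fin.cons (m - ∑ i, y.1 i) y.1, by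
    rw [Fin.sum_cons]; have := y.2; omega⟩
  invFun z := ⟨Fin.tail z.1, by
    have := z.2; rw [Fin.sum_univ_succ] at this
    simp only [Fin.tail]; omega⟩
  left_inv y := Subtype.ext (by simp [Fin.tail_cons])
  right_inv z := Subtype.ext (by
    have h := z.2; rw [Fin.sum_univ_succ] at h
    have h0 : m - ∑ i, Fin.tail z.1 i = z.1 0 := by simp only [Fin.tail]; omega
    conv_rhs => rw [← Fin.cons_self_tail z.1]
    show Fin.cons (m - ∑ i, Fin.tail z.1 i) (Fin.tail z.1) = _
    rw [h0])

lemma isBridge_iff (σ : ℕ) (b : List ℤ) :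
    IsBridge σ b ↔ PreB σ b ∧ b.getD σ 0 ≤ 0 :=
  ⟨fun ⟨a, b, c, d⟩ => ⟨⟨a, b, c⟩, d⟩, fun ⟨⟨a, b, c⟩, d⟩ => ⟨a, b, c, d⟩⟩

noncomputable def totalEquiv (σ : ℕ) :
    {b : List ℤ // IsBridge σ b} ≃ {y : Fin σ → ℕ // ∑ i, y i ≤ σ} :=
  ((Equiv.subtypeEquivRight (isBridge_iff σ)).trans
    (Equiv.subtypeSubtypeEquivSubtypeInter (PreB σ) _).symm).trans
    ((preEquiv σ).subtypeEquiv (fun b => by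
      rw [endpoint_eq σ b, ← Nat.cast_sum]
      omega))

noncomputable def endEquiv (σ k : ℕ) :
    {b : List ℤ // IsBridge σ b ∧ b.getD σ 0 = -(k : ℤ)} ≃
      {y : Fin σ → ℕ // ∑ i, y i = σ - k ∧ k ≤ σ} :=
  ((Equiv.subtypeEquivRight (fun b => by
      rw [isBridge_iff]
      constructor
      · rintro ⟨⟨hp, _⟩, he⟩; exact ⟨hp, he⟩
      · rintro ⟨hp, he⟩
        exact ⟨⟨hp, by rw [he]; simp⟩, he⟩)).trans
    (Equiv.subtypeSubtypeEquivSubtypeInter (PreB σ) (fun b => b.getD σ 0 = -(k:ℤ))).symm).trans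
    ((preEquiv σ).subtypeEquiv (fun b => by
      rw [endpoint_eq σ b, ← Nat.cast_sum]
      omega))

lemma cardTotal (σ : ℕ) :
    Nat.card {b : List ℤ // IsBridge σ b} = (2 * σ).choose σ := by
  rw [Nat.card_congr ((totalEquiv σ).trans (slackEquiv σ σ)), card_tuple_sum]
  congr 1
  omega

lemma cardEnd (σ k : ℕ) (hk : k ≤ σ) :
    Nat.card {b : List ℤ // IsBridge σ b ∧ b.getD σ 0 = -(k : ℤ)}
      = (2 * σ - k - 1).choose (σ - k) := by
  rw [Nat.card_congr ((endEquiv σ k).trans (Equiv.subtypeEquivRight (fun y => by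
    constructor
    · rintro ⟨h, _⟩; exact h
    · intro h; exact ⟨h, hk⟩))), card_tuple_sum]
  congr 1
  omega

lemma choose_base (σ : ℕ) (hσ : 1 ≤ σ) :
    2 * (2 * σ - 1).choose σ = (2 * σ).choose σ := by
  have h1 := Nat.add_one_mul_choose_eq (2 * σ - 1) (σ - 1)
  rw [show 2*σ-1+1 = 2*σ by omega, show σ-1+1 = σ by omega] at h1
  have hsym := Nat.choose_symm (show σ ≤ 2*σ-1 by omega)
  rw [show 2*σ-1-σ = σ-1 by omega] at hsym
  rw [hsym] at h1
  apply Nat.eq_of_mul_eq_mul_left (show 0 < σ by omega)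
  calc σ * (2 * (2*σ-1).choose σ) = (2*σ) * (2*σ-1).choose σ := by ring
    _ = (2*σ).choose σ * σ := h1
    _ = σ * (2*σ).choose σ := by ring

lemma choose_step (σ k : ℕ) (h : k + 1 ≤ σ) :
    (2*σ - k - 1) * (2*σ - k - 2).choose (σ - k - 1)
      = (σ - k) * (2*σ - k - 1).choose (σ - k) := by
  have h1 := Nat.add_one_mul_choose_eq (2*σ - k - 2) (σ - k - 1)
  rw [show 2*σ-k-2+1 = 2*σ-k-1 by omega, show σ-k-1+1 = σ-k by omega] at h1
  rw [h1]; ring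

lemma real_ratio_tendsto (k : ℕ) :
    Tendsto (fun x : ℝ => (x - k) / (2 * x - k - 1)) atTop (nhds 2⁻¹) := by
  have h1 : Tendsto (fun x : ℝ => 1 - k / x) atTop (nhds 1) := by
    simpa using tendsto_const_nhds.sub
      ((tendsto_const_nhds (x := (k:ℝ))).div_atTop tendsto_id)
  have h2 : Tendsto (fun x : ℝ => 2 - ((k:ℝ) + 1) / x) atTop (nhds 2) := by
    simpa using tendsto_const_nhds.sub
      ((tendsto_const_nhds (x := (k:ℝ)+1)).div_atTop tendsto_id)
  have h3 := h1.div h2 two_ne_zero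
  rw [show (1:ℝ)/2 = 2⁻¹ by norm_num] at h3
  refine Tendsto.congr' ?_ h3
  filter_upwards [eventually_ge_atTop ((k:ℝ) + 2)] with x hx
  have hk0 : (0:ℝ) ≤ k := Nat.cast_nonneg k
  have hx0 : x ≠ 0 := by nlinarith
  have hd : 2*x - (k:ℝ) - 1 ≠ 0 := by nlinarith
  have hq : 2 - ((k:ℝ)+1)/x ≠ 0 := by
    have hx1 : (0:ℝ) < x := by nlinarith
    have : ((k:ℝ)+1)/x < 1 := by rw [div_lt_one hx1]; nlinarith
    nlinarith
  show (1 - (k:ℝ)/x) / (2 - ((k:ℝ)+1)/x) = _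
  rw [div_eq_div_iff hq hd]
  field_simp
  ring

lemma nat_ratio_tendsto (k : ℕ) :
    Tendsto (fun σ : ℕ => ((σ - k : ℕ) : ℝ) / ((2*σ - k - 1 : ℕ) : ℝ))
      atTop (nhds 2⁻¹) := by
  have h := (real_ratio_tendsto k).comp tendsto_natCast_atTop_atTop (α := ℕ)
  refine Tendsto.congr' ?_ h
  filter_upwards [eventually_ge_atTop (k+1)] with σ hσ
  show ((σ:ℝ) - k) / (2 * σ - k - 1) = _
  rw [Nat.cast_sub (by omega), Nat.cast_sub (by omega), Nat.cast_sub (by omega)]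
  push_cast
  ring_nf

lemma ratio_tendsto (k : ℕ) :
    Tendsto (fun σ : ℕ => ((2*σ - k - 1).choose (σ - k) : ℝ) / ((2*σ).choose σ : ℝ))
      atTop (nhds ((2:ℝ)⁻¹ ^ (k+1))) := by
  induction k with
  | zero =>
    rw [pow_one]
    refine Tendsto.congr' ?_ tendsto_const_nhds
    filter_upwards [eventually_ge_atTop 1] with σ hσ
    have hb := choose_base σ hσ
    have hpos : 0 < (2*σ).choose σ := Nat.choose_pos (by omega)
    rw [show 2*σ-0-1 = 2*σ-1 by omega, Nat.sub_zero]
    rw [eq_div_iff (by exact_mod_cast hpos.ne')]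
    rw [show ((2*σ).choose σ : ℝ) = 2 * ((2*σ-1).choose σ : ℝ) by exact_mod_cast hb.symm]
    ring
  | succ k ih =>
    have hmul := ih.mul (nat_ratio_tendsto k)
    rw [← pow_succ] at hmul
    refine Tendsto.congr' ?_ hmul
    filter_upwards [eventually_ge_atTop (k+1)] with σ hσ
    have hc := choose_step σ k hσ
    have hT : ((2*σ).choose σ : ℝ) ≠ 0 := by
      exact_mod_cast (Nat.choose_pos (by omega)).ne'
    have hD : ((2*σ-k-1 : ℕ):ℝ) ≠ 0 := by
      exact_mod_cast (show (0:ℕ) < 2*σ-k-1 by omega).ne'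
    rw [show 2*σ-(k+1)-1 = 2*σ-k-2 by omega, show σ-(k+1) = σ-k-1 by omega]
    have hcr : ((2*σ-k-1:ℕ):ℝ) * ((2*σ-k-2).choose (σ-k-1) : ℝ)
        = ((σ-k:ℕ):ℝ) * ((2*σ-k-1).choose (σ-k) : ℝ) := by exact_mod_cast hc
    field_simp
    linear_combination (-1:ℝ) * hcr

/-- For a uniformly random bridge of length `σ`, the probability that `b σ = -k` converges,
as `σ → ∞`, to `2^{-k-1}`, for each fixed `k ≥ 0`. -/
theorem prob_bridge_endpoint_limit (k : ℕ) :
    Tendsto (fun σ : ℕ =>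
        (Nat.card {b : List ℤ // IsBridge σ b ∧ b.getD σ 0 = -(k : ℤ)} : ℝ) /
          (Nat.card {b : List ℤ // IsBridge σ b} : ℝ))
      atTop (nhds ((2 : ℝ)⁻¹ ^ (k + 1))) := by
  refine Tendsto.congr' ?_ (ratio_tendsto k)
  filter_upwards [eventually_ge_atTop (k+1)] with σ hσ
  rw [cardEnd σ k (by omega), cardTotal σ]
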